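/- There exist positive constants θ₂, θ₃ such that for all n sufficiently large, P(TSP_n ≥ θ₂√n) ≥ 1 − exp(−θ₃ n / log n). -/

import Mathlib

open MeasureTheory ProbabilityTheory Filter Finset
open scoped ENNReal Classical

noncomputable section

/-- Length of the closed tour visiting the points of `l` in cyclic order. -/
def tourLength (l : List (ℝ × ℝ)) : ℝ :=
  ((l.zip (l.rotate 1)).map fun p => dist p.1 p.2).sum

/-- TSP length of a finite set of points in the plane: the minimum over spanning cycles
(cyclic orderings of the points) of the total edge length; `0` if there are at most
two points. -/
def tspLength (P : Finset (ℝ × ℝ)) : ℝ :=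
  if P.card ≤ 2 then 0
  else sInf {L : ℝ | ∃ l : List (ℝ × ℝ), l.Nodup ∧ l.toFinset = P ∧ L = tourLength l}

/-- Axis-parallel square with lower-left corner `c` and side length `r`. -/
def square (c : ℝ × ℝ) (r : ℝ) : Set (ℝ × ℝ) := Set.Icc c (c.1 + r, c.2 + r)

def unitSquare : Set (ℝ × ℝ) := square (0, 0) 1

def pathDist : List (ℝ × ℝ) → ℝ
  | [] => 0
  | [_] => 0
  | a :: b :: t => dist a b + pathDist (b :: t)

lemma pathDist_nonneg (l : List (ℝ × ℝ)) : 0 ≤ pathDist l := by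
  induction l with
  | nil => simp [pathDist]
  | cons a t ih =>
    cases t with
    | nil => simp [pathDist]
    | cons b t' => simpa [pathDist] using add_nonneg dist_nonneg (by simpa using ih)

lemma pathDist_head_swap (u a : ℝ × ℝ) (r : List (ℝ × ℝ)) (hr : r ≠ []) :
    pathDist (u :: r) ≤ dist u a + pathDist (a :: r) := by
  cases r with
  | nil => exact absurd rfl hr
  | cons c t =>
    simp only [pathDist]
    have := dist_triangle u a c
    linarith

lemma pathDist_last_swap (l : List (ℝ × ℝ)) (v w : ℝ × ℝ) (hl : l ≠ []) :
    pathDist (l ++ [v]) ≤ pathDist (l ++ [w]) + dist w v := by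
  induction l with
  | nil => exact absurd rfl hl
  | cons a t ih =>
    cases t with
    | nil =>
      simp only [List.cons_append, List.nil_append, pathDist]
      have := dist_triangle a w v
      linarith
    | cons b t' =>
      have h2 := ih (by simp)
      simp only [List.cons_append, List.append_eq, pathDist] at *
      linarith

lemma pathDist_mono_sub : ∀ {l₁ l₂ : List (ℝ × ℝ)}, l₁.Sublist l₂ → ∀ u v,
    pathDist (u :: l₁ ++ [v]) ≤ pathDist (u :: l₂ ++ [v]) := by
  intro l₁ l₂ h
  induction h with
  | slnil => intro u v; exact le_refl _
  | cons a h ih =>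
    intro u v
    rename_i l₁' l₂'
    have h1 : pathDist (u :: l₁' ++ [v]) ≤ dist u a + pathDist (a :: l₁' ++ [v]) := by
      have := pathDist_head_swap u a (l₁' ++ [v]) (by simp)
      simpa using this
    have h2 := ih a v
    have h3 : pathDist (u :: (a :: l₂') ++ [v]) = dist u a + pathDist (a :: l₂' ++ [v]) := by
      simp [pathDist]
    linarith
  | cons_cons a h ih =>
    intro u v
    rename_i l₁' l₂'
    have h2 := ih a v
    have e1 : pathDist (u :: (a :: l₁') ++ [v]) = dist u a + pathDist (a :: l₁' ++ [v]) := by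
      simp [pathDist]
    have e2 : pathDist (u :: (a :: l₂') ++ [v]) = dist u a + pathDist (a :: l₂' ++ [v]) := by
      simp [pathDist]
    rw [e1, e2]
    linarith

lemma tour_mono : ∀ (xs ys : List (ℝ × ℝ)) (x y : ℝ × ℝ), (y :: ys).Sublist (x :: xs) →
    pathDist (y :: ys ++ [y]) ≤ pathDist (x :: xs ++ [x]) := by
  intro xs
  induction xs with
  | nil =>
    intro ys x y h
    cases h with
    | cons _ h' => cases h'
    | cons_cons _ h' =>
      cases h'
      simp [pathDist]
  | cons z zs ih =>
    intro ys x y h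
    cases h with
    | cons_cons _ h' => exact pathDist_mono_sub h' x x
    | cons _ h' =>
      have hIH := ih ys z y h'
      have h3 : pathDist (z :: zs ++ [z]) ≤ pathDist (z :: zs ++ [x]) + dist x z := by
        simpa using pathDist_last_swap (z :: zs) z x (by simp)
      have h4 : pathDist (x :: (z :: zs) ++ [x]) = dist x z + pathDist (z :: zs ++ [x]) := by
        simp [pathDist]
      rw [h4]
      linarith

lemma pathDist_chain_bound (s : ℝ) : ∀ (l : List (ℝ × ℝ)), l ≠ [] →
    List.Chain' (fun a b => s ≤ dist a b) l →
    s * ((l.length : ℝ) - 1) ≤ pathDist l := by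
  intro l
  induction l with
  | nil => intro h; exact absurd rfl h
  | cons a t ih =>
    intro _ hc
    cases t with
    | nil => simp [pathDist]
    | cons b t' =>
      have hc1 : s ≤ dist a b := List.isChain_cons_cons.mp hc |>.1
      have hc2 := List.isChain_cons_cons.mp hc |>.2
      have := ih (by simp) hc2
      simp only [List.length_cons, pathDist] at *
      push_cast at *
      nlinarith [pathDist_nonneg (b :: t')]

-- zip truncation helper
lemma zip_append_right {α : Type*} (l1 l2 l3 : List α) (h : l2.length ≤ l1.length) :
    (l1 ++ l3).zip l2 = l1.zip l2 := by
  induction l1 generalizing l2 with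
  | nil => cases l2 with
    | nil => simp
    | cons b t => simp at h
  | cons a t ih =>
    cases l2 with
    | nil => simp
    | cons b t2 => simp_all [List.zip]

lemma pathDist_eq (l : List (ℝ × ℝ)) :
    pathDist l = ((l.zip l.tail).map fun p => dist p.1 p.2).sum := by
  induction l with
  | nil => simp [pathDist]
  | cons a t ih =>
    cases t with
    | nil => simp [pathDist]
    | cons b t' => simp [pathDist, ih]

lemma tourLength_eq (x : ℝ × ℝ) (xs : List (ℝ × ℝ)) :
    tourLength (x :: xs) = pathDist (x :: xs ++ [x]) := by
  rw [pathDist_eq]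
  have hrot : (x :: xs).rotate 1 = xs ++ [x] := by
    simpa using List.rotate_cons_succ xs x 0
  have htail : (x :: xs ++ [x]).tail = xs ++ [x] := rfl
  rw [tourLength, hrot, htail]
  congr 1
  have : (x :: xs ++ [x]) = (x :: xs) ++ [x] := by simp
  rw [this, zip_append_right]
  simp

lemma tourLength_mono (l l' : List (ℝ × ℝ)) (h : l'.Sublist l) (h' : l' ≠ []) :
    tourLength l' ≤ tourLength l := by
  cases l' with
  | nil => exact absurd rfl h'
  | cons y ys =>
    cases l with
    | nil => exact absurd (List.sublist_nil.mp h) (by simp)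
    | cons x xs =>
      rw [tourLength_eq, tourLength_eq]
      exact tour_mono xs ys x y h

lemma tsp_lower (P T : Finset (ℝ × ℝ)) (hT : T ⊆ P) (s : ℝ)
    (hsep : ∀ x ∈ T, ∀ y ∈ T, x ≠ y → s ≤ dist x y) (hcard : 3 ≤ T.card) :
    s * T.card ≤ tspLength P := by
  have hP : ¬ P.card ≤ 2 := by
    have := Finset.card_le_card hT; omega
  rw [tspLength, if_neg hP]
  apply le_csInf
  · exact ⟨tourLength P.toList, P.toList, P.nodup_toList, by simp, rfl⟩
  · rintro L ⟨l, hnd, hPl, rfl⟩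
    set l' := l.filter (· ∈ T) with hl'
    have hsub : l'.Sublist l := List.filter_sublist
    have hnd' : l'.Nodup := hsub.nodup hnd
    have hmem' : ∀ a, a ∈ l' ↔ a ∈ T := by
      intro a
      simp only [hl', List.mem_filter, decide_eq_true_eq]
      constructor
      · exact fun h => h.2
      · intro h
        refine ⟨?_, h⟩
        have : a ∈ P := hT h
        rw [← hPl] at this
        exact List.mem_toFinset.mp this
    have hfin : l'.toFinset = T := by
      ext a; simp [hmem' a]
    have hlen : l'.length = T.card := by
      rw [← hfin, List.toFinset_card_of_nodup hnd']
    have hne : l' ≠ [] := by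
      intro h; rw [h] at hlen; simp at hlen; omega
    obtain ⟨y, ys, hyys⟩ : ∃ y ys, l' = y :: ys := List.exists_cons_of_ne_nil hne
    have hysne : ys ≠ [] := by
      intro h; rw [hyys, h] at hlen; simp at hlen; omega
    have hpair : l'.Pairwise (fun a b => s ≤ dist a b) := by
      refine List.Pairwise.imp_of_mem ?_ hnd'
      intro a b ha hb hab
      exact hsep a ((hmem' a).mp ha) b ((hmem' b).mp hb) hab
    have hchain : List.Chain' (fun a b => s ≤ dist a b) (y :: ys ++ [y]) := by
      rw [show (y :: ys ++ [y]) = (y :: ys) ++ [y] by simp]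
      unfold List.Chain'; rw [List.isChain_append]
      refine ⟨hyys ▸ hpair.isChain, List.isChain_singleton y, ?_⟩
      intro a ha b hb
      simp only [List.head?_cons, Option.mem_def, Option.some.injEq] at hb
      subst hb
      have hlast : a = (y :: ys).getLast (by simp) := by
        rwa [List.getLast?_eq_getLast (l := y :: ys) (by simp), Option.mem_def, Option.some.injEq, eq_comm] at ha
      have hal : a ∈ l' := by
        rw [hyys]; rw [hlast]; exact List.getLast_mem _
      have hay : a ≠ y := by
        rw [hlast, List.getLast_cons hysne]
        intro h
        have h1 : ys.getLast hysne ∈ ys := List.getLast_mem hysne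
        rw [hyys] at hnd'
        exact (List.nodup_cons.mp hnd').1 (h ▸ h1)
      exact hsep a ((hmem' a).mp hal) y ((hmem' y).mp (by rw [hyys]; simp)) hay
    have hb := pathDist_chain_bound s (y :: ys ++ [y]) (by simp) hchain
    have hlen2 : ((y :: ys ++ [y]).length : ℝ) - 1 = (T.card : ℝ) := by
      have : (y :: ys ++ [y]).length = l'.length + 1 := by rw [hyys]; simp
      rw [this, hlen]; push_cast; ring
    rw [hlen2] at hb
    have h1 : tourLength l' ≤ tourLength l := tourLength_mono l l' hsub hne
    have h2 : tourLength l' = pathDist (y :: ys ++ [y]) := by rw [hyys, tourLength_eq]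
    linarith


lemma sep_aux (m : ℕ) (i j : Fin m) (hij : i ≠ j) (u v : ℝ)
    (hu1 : (i : ℝ)/m ≤ u) (hu2 : u ≤ (i : ℝ)/m + 1/(2*m))
    (hv1 : (j : ℝ)/m ≤ v) (hv2 : v ≤ (j : ℝ)/m + 1/(2*m)) :
    1/(2*m) ≤ |u - v| := by
  have hm0 : (0 : ℝ) < m := by exact_mod_cast i.pos
  have h2 : 1/(m:ℝ) - 1/(2*m) = 1/(2*m) := by field_simp; ring
  rcases lt_or_gt_of_ne (fun h => hij (Fin.ext h)) with h | h
  · have hij' : (i : ℝ) + 1 ≤ (j : ℝ) := by exact_mod_cast Nat.succ_le_of_lt h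
    have h1 : ((i:ℝ) + 1)/m ≤ (j:ℝ)/m := by gcongr
    have h3 : ((i:ℝ)+1)/m = (i:ℝ)/m + 1/m := by ring
    have key : 1/(2*m) ≤ v - u := by linarith
    calc 1/(2*m) ≤ v - u := key
      _ ≤ |u - v| := by rw [abs_sub_comm]; exact le_abs_self _
  · have hij' : (j : ℝ) + 1 ≤ (i : ℝ) := by exact_mod_cast Nat.succ_le_of_lt h
    have h1 : ((j:ℝ) + 1)/m ≤ (i:ℝ)/m := by gcongr
    have h3 : ((j:ℝ)+1)/m = (j:ℝ)/m + 1/m := by ring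
    have key : 1/(2*m) ≤ u - v := by linarith
    calc 1/(2*m) ≤ u - v := key
      _ ≤ |u - v| := le_abs_self _

set_option maxHeartbeats 1000000 in
theorem tsp_lower_deviation_bound
    (Ω : Type) [MeasurableSpace Ω] (Pr : Measure Ω) [IsProbabilityMeasure Pr]
    (ε₁ ε₂ : ℝ) (hε₁ : 0 < ε₁) (hε₁₂ : ε₁ ≤ ε₂)
    (f : ℝ × ℝ → ℝ) (hfm : Measurable f)
    (hf : ∀ x ∈ unitSquare, ε₁ ≤ f x ∧ f x ≤ ε₂)
    (hf1 : ∫ x in unitSquare, f x = 1)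
    (X : (n : ℕ) → Fin n → Ω → ℝ × ℝ)
    (hXm : ∀ n i, Measurable (X n i))
    (hiid : ∀ n, iIndepFun (X n) Pr)
    (hlaw : ∀ n i, Measure.map (X n i) Pr =
      (volume.restrict unitSquare).withDensity fun x => ENNReal.ofReal (f x))
    (TSPn : (n : ℕ) → Ω → ℝ)
    (hTSPn : ∀ n ω, TSPn n ω = tspLength (Finset.univ.image fun i : Fin n => X n i ω))
    :
    ∃ θ₂ θ₃ : ℝ, 0 < θ₂ ∧ 0 < θ₃ ∧ ∀ᶠ n : ℕ in atTop,
      ENNReal.ofReal (1 - Real.exp (-θ₃ * (n : ℝ) / Real.log n)) ≤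
        Pr {ω | θ₂ * Real.sqrt n ≤ TSPn n ω} := by
  classical
  set ε := min ε₁ 1 with hεdef
  have hε0 : 0 < ε := lt_min hε₁ one_pos
  have hε1 : ε ≤ 1 := min_le_right _ _
  set c : ℕ := max 32 ⌈(32 : ℝ) / ε⌉₊ with hcdef
  have hc32 : 32 ≤ c := le_max_left _ _
  have hc0 : 0 < c := by omega
  have hc0R : (0:ℝ) < c := by exact_mod_cast hc0
  have hcε : 32 / ε ≤ (c : ℝ) := by
    refine le_trans (Nat.le_ceil _) ?_
    exact_mod_cast le_max_right 32 ⌈(32:ℝ)/ε⌉₊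
  have hsqc0 : 0 < Real.sqrt (2*c) := Real.sqrt_pos.mpr (by positivity)
  refine ⟨1 / (16 * Real.sqrt (2 * c)), ε / 32, by positivity, by positivity, ?_⟩
  filter_upwards [eventually_ge_atTop (65 * c + 65)] with n hn
  have hn1 : 1 ≤ n := by omega
  set m := Nat.sqrt (n / c) with hmdef
  have hm8 : 8 ≤ m := by
    have h64 : 64 ≤ n / c := Nat.le_div_iff_mul_le hc0 |>.mpr (by nlinarith)
    calc 8 = Nat.sqrt 64 := by norm_num
      _ ≤ m := Nat.sqrt_le_sqrt h64
  have hm0 : 0 < m := by omega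
  have hmR : (8:ℝ) ≤ m := by exact_mod_cast hm8
  have hm0R : (0:ℝ) < m := by linarith
  set s : ℝ := 1 / (2 * m) with hsdef
  have hs0 : 0 < s := by positivity
  set kk := m * m / 2 with hkkdef
  have hmm64 : 64 ≤ m * m := Nat.mul_le_mul hm8 hm8
  have hkk3 : 3 ≤ kk := by omega
  have hkkR : ((m:ℝ) * m - 1) / 2 ≤ (kk : ℝ) := by
    have h1 : m * m ≤ 2 * kk + 1 := by omega
    have h2 : (m:ℝ) * m ≤ 2 * kk + 1 := by exact_mod_cast h1
    linarith
  -- upper bound on m : m*m*32 ≤ ε*n  (real)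
  have hm2n : (m:ℝ) * m * 32 ≤ ε * n := by
    have h1 : m * m ≤ n / c := Nat.sqrt_le (n / c)
    have h2 : ((m:ℝ) * m) ≤ ((n / c : ℕ) : ℝ) := by exact_mod_cast h1
    have h3 : ((n / c : ℕ) : ℝ) ≤ (n : ℝ) / c := Nat.cast_div_le
    have h4 : (32:ℝ) ≤ ε * c := by
      rw [div_le_iff₀ hε0] at hcε; linarith
    have h6 : ((n:ℝ)/c) * c = n := by field_simp
    have h7 : ((m:ℝ) * m) * c ≤ ((n:ℝ)/c) * c :=
      mul_le_mul_of_nonneg_right (h2.trans h3) hc0R.le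
    have h5 : (m:ℝ) * m * c ≤ n := by linarith
    have h8 : ε * ((m:ℝ) * m * c) ≤ ε * n := mul_le_mul_of_nonneg_left h5 hε0.le
    have h9 : (m:ℝ) * m * 32 ≤ (m:ℝ) * m * (ε * c) :=
      mul_le_mul_of_nonneg_left h4 (by positivity)
    nlinarith
  -- lower bound on m : sqrt n ≤ 2 sqrt(2c) m
  have hm_lb : Real.sqrt n ≤ 2 * Real.sqrt (2*c) * m := by
    have h1 : n / c < (m + 1) * (m + 1) := Nat.lt_succ_sqrt (n / c)
    have hdm := Nat.div_add_mod n c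
    have hlt := Nat.mod_lt n hc0
    have h2 : n < c * (n / c + 1) := by
      calc n = c * (n / c) + n % c := hdm.symm
        _ < c * (n / c) + c := by omega
        _ = c * (n / c + 1) := by ring
    have h3 : n ≤ c * ((m+1) * (m+1)) := by
      calc n ≤ c * (n / c + 1) := le_of_lt h2
        _ ≤ c * ((m+1)*(m+1)) := Nat.mul_le_mul_left c h1
    have h4 : (n : ℝ) ≤ c * ((m:ℝ)+1) * ((m:ℝ)+1) := by
      have := (Nat.cast_le (α := ℝ)).mpr h3
      push_cast at this
      linarith
    have h5 : (n : ℝ) ≤ (2 * Real.sqrt (2*c) * m)^2 := by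
      have hsq : Real.sqrt (2*c) ^ 2 = 2*c := Real.sq_sqrt (by positivity)
      have h6 : ((m:ℝ)+1) ≤ 2 * m := by linarith
      have h7 : (2 * Real.sqrt (2*c) * m)^2 = 8*(c:ℝ)*(m:ℝ)^2 := by
        rw [mul_pow, mul_pow, hsq]; ring
      nlinarith
    calc Real.sqrt n ≤ Real.sqrt ((2 * Real.sqrt (2*c) * m)^2) := Real.sqrt_le_sqrt h5
      _ = 2 * Real.sqrt (2*c) * m := Real.sqrt_sq (by positivity)
  -- cells
  set cell : Fin m × Fin m → Set (ℝ × ℝ) := fun c' =>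
    Set.Icc ((c'.1:ℝ)/m, (c'.2:ℝ)/m) ((c'.1:ℝ)/m + s, (c'.2:ℝ)/m + s) with hcelldef
  have hcellmeas : ∀ c', MeasurableSet (cell c') := fun c' => measurableSet_Icc
  have hcellmem : ∀ c' p, p ∈ cell c' ↔
      ((c'.1:ℝ)/m ≤ p.1 ∧ p.1 ≤ (c'.1:ℝ)/m + s) ∧ ((c'.2:ℝ)/m ≤ p.2 ∧ p.2 ≤ (c'.2:ℝ)/m + s) := by
    intro c' p
    constructor
    · rintro ⟨⟨h1, h2⟩, ⟨h3, h4⟩⟩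
      exact ⟨⟨h1, h3⟩, ⟨h2, h4⟩⟩
    · rintro ⟨⟨h1, h2⟩, ⟨h3, h4⟩⟩
      exact ⟨⟨h1, h3⟩, ⟨h2, h4⟩⟩
  have hcellsub : ∀ c', cell c' ⊆ unitSquare := by
    intro c' p hp
    rw [hcellmem] at hp
    obtain ⟨⟨h1, h2⟩, ⟨h3, h4⟩⟩ := hp
    have hi1 : (c'.1 : ℝ) ≤ (m:ℝ) - 1 := by
      have := c'.1.isLt; have : (c'.1 : ℕ) + 1 ≤ m := this
      have : ((c'.1:ℕ):ℝ) + 1 ≤ m := by exact_mod_cast this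
      linarith
    have hi2 : (c'.2 : ℝ) ≤ (m:ℝ) - 1 := by
      have := c'.2.isLt; have : (c'.2 : ℕ) + 1 ≤ m := this
      have : ((c'.2:ℕ):ℝ) + 1 ≤ m := by exact_mod_cast this
      linarith
    have hub : ∀ t : ℝ, t ≤ (m:ℝ) - 1 → t/m + s ≤ 1 := by
      intro t ht
      rw [hsdef, div_add_div _ _ (by linarith) (by positivity)]
      rw [div_le_one (by positivity)]
      nlinarith
    have hlb : ∀ t : ℝ, 0 ≤ t → (0:ℝ) ≤ t/m := fun t ht => by positivity
    constructor
    · constructor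
      · simpa using le_trans (hlb _ (Nat.cast_nonneg _)) h1
      · simpa using le_trans (hlb _ (Nat.cast_nonneg _)) h3
    · constructor
      · simpa using le_trans h2 (hub _ hi1)
      · simpa using le_trans h4 (hub _ hi2)
  have hcellsep : ∀ c₁ c₂ : Fin m × Fin m, c₁ ≠ c₂ →
      ∀ x ∈ cell c₁, ∀ y ∈ cell c₂, s ≤ dist x y := by
    intro c₁ c₂ hne x hx y hy
    rw [hcellmem] at hx hy
    have hcase : c₁.1 ≠ c₂.1 ∨ c₁.2 ≠ c₂.2 := by
      by_contra hcon
      push_neg at hcon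
      exact hne (Prod.ext hcon.1 hcon.2)
    rcases hcase with h | h
    · have := sep_aux m c₁.1 c₂.1 h x.1 y.1 hx.1.1 hx.1.2 hy.1.1 hy.1.2
      calc s = 1/(2*(m:ℝ)) := hsdef
        _ ≤ |x.1 - y.1| := this
        _ = dist x.1 y.1 := (Real.dist_eq _ _).symm
        _ ≤ dist x y := le_max_left _ _
    · have := sep_aux m c₁.2 c₂.2 h x.2 y.2 hx.2.1 hx.2.2 hy.2.1 hy.2.2
      calc s = 1/(2*(m:ℝ)) := hsdef
        _ ≤ |x.2 - y.2| := this
        _ = dist x.2 y.2 := (Real.dist_eq _ _).symm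
        _ ≤ dist x y := le_max_right _ _
  have hcellvol : ∀ c', volume (cell c') = ENNReal.ofReal s * ENNReal.ofReal s := by
    intro c'
    simp only [hcelldef]
    rw [Set.Icc_prod_eq, Measure.volume_eq_prod, Measure.prod_prod, Real.volume_Icc, Real.volume_Icc]
    norm_num
  -- law of each point
  set ν := (volume.restrict unitSquare).withDensity fun x => ENNReal.ofReal (f x) with hνdef
  have hνprob : IsProbabilityMeasure ν := by
    rw [← hlaw n ⟨0, by omega⟩]
    exact Measure.isProbabilityMeasure_map (hXm n _).aemeasurable
  have hPrX : ∀ (i : Fin n) (A : Set (ℝ×ℝ)), MeasurableSet A → Pr (X n i ⁻¹' A) = ν A := by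
    intro i A hA
    rw [← hlaw n i, Measure.map_apply (hXm n i) hA]
  have hUcard : ∀ E : Finset (Fin m × Fin m), E.card = kk →
      ENNReal.ofReal (ε/16) ≤ ν (⋃ c' ∈ E, cell c') := by
    intro E hEcard
    have hUm : MeasurableSet (⋃ c' ∈ E, cell c') :=
      E.measurableSet_biUnion (fun c' _ => hcellmeas c')
    have hUsub : (⋃ c' ∈ E, cell c') ⊆ unitSquare := by
      intro p hp
      rw [Set.mem_iUnion₂] at hp
      obtain ⟨c', _, hp'⟩ := hp
      exact hcellsub c' hp'
    have hdisj : (E : Set (Fin m × Fin m)).PairwiseDisjoint cell := by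
      intro c₁ _ c₂ _ hne
      refine Set.disjoint_left.mpr ?_
      intro p hp₁ hp₂
      have := hcellsep c₁ c₂ hne p hp₁ p hp₂
      rw [dist_self] at this
      linarith
    have hvol : volume (⋃ c' ∈ E, cell c') = (kk : ℝ≥0∞) * (ENNReal.ofReal s * ENNReal.ofReal s) := by
      rw [measure_biUnion_finset hdisj (fun c' _ => hcellmeas c')]
      rw [Finset.sum_congr rfl (fun c' _ => hcellvol c'), Finset.sum_const, hEcard, nsmul_eq_mul]
    have hν_ge : ENNReal.ofReal ε * volume (⋃ c' ∈ E, cell c') ≤ ν (⋃ c' ∈ E, cell c') := by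
      rw [hνdef, withDensity_apply _ hUm]
      rw [Measure.restrict_restrict hUm, Set.inter_eq_self_of_subset_left hUsub]
      calc ENNReal.ofReal ε * volume (⋃ c' ∈ E, cell c')
          = ∫⁻ _ in (⋃ c' ∈ E, cell c'), ENNReal.ofReal ε ∂volume := by
            rw [setLIntegral_const]
        _ ≤ ∫⁻ x in (⋃ c' ∈ E, cell c'), ENNReal.ofReal (f x) ∂volume :=
            setLIntegral_mono hfm.ennreal_ofReal fun x hx =>
              ENNReal.ofReal_le_ofReal (le_trans (min_le_left _ _) (hf x (hUsub hx)).1)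
    refine le_trans ?_ hν_ge
    rw [hvol]
    have : (kk : ℝ≥0∞) = ENNReal.ofReal (kk : ℝ) := by
      rw [ENNReal.ofReal_natCast]
    rw [this, ← ENNReal.ofReal_mul hs0.le, ← ENNReal.ofReal_mul (by positivity), ← ENNReal.ofReal_mul hε0.le]
    apply ENNReal.ofReal_le_ofReal
    have hss : s * s = 1 / (4 * ((m:ℝ) * m)) := by
      rw [hsdef]; field_simp; ring
    have hkey : (1:ℝ)/16 ≤ (kk:ℝ) * (s * s) := by
      rw [hss]
      have h1 : ((m:ℝ)*m - 1)/2 * (1 / (4 * ((m:ℝ)*m))) ≤ (kk:ℝ) * (1 / (4 * ((m:ℝ)*m))) := by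
        apply mul_le_mul_of_nonneg_right hkkR (by positivity)
      refine le_trans ?_ h1
      rw [div_mul_div_comm, le_div_iff₀ (by positivity)]
      nlinarith
    nlinarith
  -- good event
  set Cw : Ω → Finset (Fin m × Fin m) :=
    fun ω => univ.filter (fun c' => ∃ i, X n i ω ∈ cell c') with hCwdef
  set good : Set Ω := {ω | kk ≤ (Cw ω).card} with hgooddef
  -- Claim 1 : on good, TSP is large
  have claim1 : good ⊆ {ω | 1 / (16 * Real.sqrt (2 * c)) * Real.sqrt n ≤ TSPn n ω} := by
    intro ω hω
    have hω' : kk ≤ (Cw ω).card := hω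
    rw [Set.mem_setOf_eq, hTSPn n ω]
    set P := Finset.univ.image (fun i : Fin n => X n i ω) with hPdef
    have hch : ∀ c' : Fin m × Fin m, c' ∈ Cw ω → ∃ p : ℝ × ℝ, p ∈ cell c' ∧ p ∈ P := by
      intro c' hc'
      obtain ⟨i, hi⟩ := (mem_filter.mp hc').2
      exact ⟨X n i ω, hi, mem_image.mpr ⟨i, mem_univ _, rfl⟩⟩
    choose! g hg1 hg2 using hch
    set T := (Cw ω).image g with hTdef
    have hinj : Set.InjOn g (Cw ω) := by
      intro c₁ h₁ c₂ h₂ heq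
      by_contra hne
      have := hcellsep c₁ c₂ hne (g c₁) (hg1 c₁ h₁) (g c₂) (hg1 c₂ h₂)
      rw [heq, dist_self] at this
      linarith
    have hTcard : T.card = (Cw ω).card := Finset.card_image_of_injOn hinj
    have hTsub : T ⊆ P := by
      intro p hp
      obtain ⟨c', hc', rfl⟩ := mem_image.mp hp
      exact hg2 c' hc'
    have hsep : ∀ x ∈ T, ∀ y ∈ T, x ≠ y → s ≤ dist x y := by
      intro x hx y hy hxy
      obtain ⟨c₁, h₁, rfl⟩ := mem_image.mp hx
      obtain ⟨c₂, h₂, rfl⟩ := mem_image.mp hy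
      have hne : c₁ ≠ c₂ := fun h => hxy (by rw [h])
      exact hcellsep c₁ c₂ hne _ (hg1 c₁ h₁) _ (hg1 c₂ h₂)
    have hkkT : kk ≤ T.card := by rw [hTcard]; exact hω'
    have h3T : 3 ≤ T.card := le_trans hkk3 hkkT
    have htsp := tsp_lower P T hTsub s hsep h3T
    have hkkTR : (kk:ℝ) ≤ (T.card : ℝ) := by exact_mod_cast hkkT
    have hnum : 1 / (16 * Real.sqrt (2 * c)) * Real.sqrt n ≤ s * T.card := by
      have h1 : 1 / (16 * Real.sqrt (2 * c)) * Real.sqrt n ≤ (m:ℝ)/8 := by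
        rw [div_mul_eq_mul_div, div_le_div_iff₀ (by positivity) (by norm_num)]
        calc 1 * Real.sqrt n * 8 = 8 * Real.sqrt n := by ring
          _ ≤ 8 * (2 * Real.sqrt (2*c) * m) := by nlinarith [hm_lb, Real.sqrt_nonneg (n:ℝ)]
          _ = (m:ℝ) * (16 * Real.sqrt (2*c)) := by ring
      have h2 : (m:ℝ)/8 ≤ s * kk := by
        rw [hsdef]
        have : (1:ℝ)/(2*m) * (((m:ℝ)*m - 1)/2) ≤ 1/(2*(m:ℝ)) * kk := by
          apply mul_le_mul_of_nonneg_left hkkR (by positivity)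
        refine le_trans ?_ this
        rw [div_le_iff₀ (by norm_num : (0:ℝ) < 8)]
        have heq : (1:ℝ)/(2*m) * (((m:ℝ)*m - 1)/2) * 8 = 2*((m:ℝ)*m-1)/m := by
          field_simp; ring
        rw [heq, le_div_iff₀ hm0R]
        nlinarith
      have h3 : s * (kk:ℝ) ≤ s * T.card := mul_le_mul_of_nonneg_left hkkTR hs0.le
      linarith
    linarith
  -- Claim 2 : bad event is unlikely
  have claim2 : Pr goodᶜ ≤ ENNReal.ofReal (Real.exp (-(ε/32) * n)) := by
    have hsubset : goodᶜ ⊆ ⋃ E ∈ powersetCard kk (univ : Finset (Fin m × Fin m)),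
        {ω | ∀ i, X n i ω ∉ ⋃ c' ∈ E, cell c'} := by
      intro ω hω
      have hω' : (Cw ω).card < kk := by
        by_contra hcon
        exact hω (by simpa [hgooddef] using not_lt.mp hcon)
      have huniv : (univ : Finset (Fin m × Fin m)).card = m * m := by
        simp [Finset.card_univ]
      have hcard : kk ≤ (univ \ Cw ω).card := by
        rw [Finset.card_sdiff_of_subset (subset_univ _), huniv]
        omega
      obtain ⟨E, hEsub, hEcard⟩ := Finset.exists_subset_card_eq hcard
      refine Set.mem_biUnion (Finset.mem_powersetCard.mpr ⟨subset_univ E, hEcard⟩) ?_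
      intro i hiU
      rw [Set.mem_iUnion₂] at hiU
      obtain ⟨c', hc'E, hc'mem⟩ := hiU
      have hmem : c' ∈ Cw ω := mem_filter.mpr ⟨mem_univ _, ⟨i, hc'mem⟩⟩
      have := hEsub hc'E
      rw [Finset.mem_sdiff] at this
      exact this.2 hmem
    have perE : ∀ E ∈ powersetCard kk (univ : Finset (Fin m × Fin m)),
        Pr {ω | ∀ i, X n i ω ∉ ⋃ c' ∈ E, cell c'} ≤ ENNReal.ofReal ((1 - ε/16)^n) := by
      intro E hE
      obtain ⟨-, hEcard⟩ := Finset.mem_powersetCard.mp hE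
      have hUm : MeasurableSet (⋃ c' ∈ E, cell c') :=
        E.measurableSet_biUnion (fun c' _ => hcellmeas c')
      have hset : {ω | ∀ i, X n i ω ∉ ⋃ c' ∈ E, cell c'} =
          ⋂ i, X n i ⁻¹' (⋃ c' ∈ E, cell c')ᶜ := by
        ext ω; simp
      rw [hset, (hiid n).meas_iInter (fun i => ⟨(⋃ c' ∈ E, cell c')ᶜ, hUm.compl, rfl⟩)]
      have hfac : ∀ i : Fin n, Pr (X n i ⁻¹' (⋃ c' ∈ E, cell c')ᶜ) ≤ ENNReal.ofReal (1 - ε/16) := by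
        intro i
        rw [hPrX i _ hUm.compl, measure_compl hUm (measure_ne_top ν _), measure_univ]
        calc (1:ℝ≥0∞) - ν (⋃ c' ∈ E, cell c') ≤ 1 - ENNReal.ofReal (ε/16) :=
            tsub_le_tsub_left (hUcard E hEcard) 1
          _ = ENNReal.ofReal (1 - ε/16) := by
            rw [ENNReal.ofReal_sub 1 (by positivity), ENNReal.ofReal_one]
      calc ∏ i : Fin n, Pr (X n i ⁻¹' (⋃ c' ∈ E, cell c')ᶜ)
          ≤ ∏ _i : Fin n, ENNReal.ofReal (1 - ε/16) := Finset.prod_le_prod' fun i _ => hfac i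
        _ = ENNReal.ofReal (1 - ε/16) ^ n := by simp
        _ = ENNReal.ofReal ((1 - ε/16)^n) := (ENNReal.ofReal_pow (by linarith) n).symm
    have hcount : (powersetCard kk (univ : Finset (Fin m × Fin m))).card ≤ 2^(m*m) := by
      calc (powersetCard kk (univ : Finset (Fin m × Fin m))).card
          ≤ (univ : Finset (Fin m × Fin m)).powerset.card := by
            apply Finset.card_le_card
            intro E hE
            rw [Finset.mem_powerset]
            exact (Finset.mem_powersetCard.mp hE).1
        _ = 2 ^ (m*m) := by
            rw [Finset.card_powerset]
            congr 1
            simp [Finset.card_univ]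
    have hreal : (2:ℝ)^(m*m) * (1 - ε/16)^n ≤ Real.exp (-(ε/32) * n) := by
      have hb : (1 - ε/16) ≤ Real.exp (-(ε/16)) := by
        have := Real.add_one_le_exp (-(ε/16)); linarith
      have hb0 : (0:ℝ) ≤ 1 - ε/16 := by linarith
      have h2 : (1 - ε/16)^n ≤ Real.exp (-(ε/16))^n := pow_le_pow_left₀ hb0 hb n
      have h2' : Real.exp (-(ε/16))^n = Real.exp ((n:ℝ) * (-(ε/16))) := by
        rw [← Real.exp_nat_mul]
      have hexp1 : (2:ℝ) ≤ Real.exp 1 := by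
        have := Real.exp_one_gt_d9; linarith
      have h3 : (2:ℝ)^(m*m) ≤ Real.exp ((m:ℝ)*m) := by
        calc (2:ℝ)^(m*m) ≤ Real.exp 1 ^ (m*m) := pow_le_pow_left₀ (by norm_num) hexp1 _
          _ = Real.exp (((m*m : ℕ) : ℝ) * 1) := by rw [← Real.exp_nat_mul]
          _ = Real.exp ((m:ℝ)*m) := by push_cast; ring_nf
      calc (2:ℝ)^(m*m) * (1 - ε/16)^n
          ≤ Real.exp ((m:ℝ)*m) * Real.exp ((n:ℝ) * (-(ε/16))) := by
            apply mul_le_mul h3 (by rw [← h2']; exact h2) (by positivity) (by positivity)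
        _ = Real.exp ((m:ℝ)*m + (n:ℝ) * (-(ε/16))) := by rw [← Real.exp_add]
        _ ≤ Real.exp (-(ε/32) * n) := by
            apply Real.exp_le_exp.mpr
            nlinarith
    calc Pr goodᶜ ≤ Pr (⋃ E ∈ powersetCard kk (univ : Finset (Fin m × Fin m)),
          {ω | ∀ i, X n i ω ∉ ⋃ c' ∈ E, cell c'}) := measure_mono hsubset
      _ ≤ ∑ E ∈ powersetCard kk (univ : Finset (Fin m × Fin m)),
          Pr {ω | ∀ i, X n i ω ∉ ⋃ c' ∈ E, cell c'} := measure_biUnion_finset_le _ _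
      _ ≤ ∑ _E ∈ powersetCard kk (univ : Finset (Fin m × Fin m)),
          ENNReal.ofReal ((1 - ε/16)^n) := Finset.sum_le_sum perE
      _ = (powersetCard kk (univ : Finset (Fin m × Fin m))).card •
          ENNReal.ofReal ((1 - ε/16)^n) := Finset.sum_const _
      _ ≤ (2^(m*m) : ℕ) • ENNReal.ofReal ((1 - ε/16)^n) := by
          exact nsmul_le_nsmul_left (by positivity) hcount
      _ = ENNReal.ofReal ((2:ℝ)^(m*m) * (1 - ε/16)^n) := by
          rw [nsmul_eq_mul, ENNReal.ofReal_mul (by positivity)]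
          congr 1
          rw [← ENNReal.ofReal_natCast]
          congr 1
          push_cast
          ring
      _ ≤ ENNReal.ofReal (Real.exp (-(ε/32) * n)) := ENNReal.ofReal_le_ofReal hreal
  -- assemble
  have hlog : 1 ≤ Real.log n := by
    rw [Real.le_log_iff_exp_le (by exact_mod_cast hn1 : (0:ℝ) < n)]
    have h1 : Real.exp 1 < 3 := by
      have := Real.exp_one_lt_d9; linarith
    have h2 : (3:ℝ) ≤ n := by
      have : 3 ≤ n := by omega
      exact_mod_cast this
    linarith
  have hexpcmp : Real.exp (-(ε/32) * n) ≤ Real.exp (-(ε/32) * n / Real.log n) := by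
    apply Real.exp_le_exp.mpr
    have hL0 : 0 < Real.log n := lt_of_lt_of_le one_pos hlog
    rw [le_div_iff₀ hL0]
    have hle : 0 ≤ (ε/32) * n := by positivity
    nlinarith
  have hcompl : 1 - Pr goodᶜ ≤ Pr good := by
    rw [tsub_le_iff_right]
    calc (1:ℝ≥0∞) = Pr Set.univ := measure_univ.symm
      _ = Pr (good ∪ goodᶜ) := by rw [Set.union_compl_self]
      _ ≤ Pr good + Pr goodᶜ := measure_union_le _ _
  calc ENNReal.ofReal (1 - Real.exp (-(ε/32) * n / Real.log n))
      = 1 - ENNReal.ofReal (Real.exp (-(ε/32) * n / Real.log n)) := by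
        rw [ENNReal.ofReal_sub 1 (Real.exp_pos _).le, ENNReal.ofReal_one]
    _ ≤ 1 - Pr goodᶜ := by
        apply tsub_le_tsub_left
        exact claim2.trans (ENNReal.ofReal_le_ofReal hexpcmp)
    _ ≤ Pr good := hcompl
    _ ≤ Pr {ω | 1 / (16 * Real.sqrt (2 * c)) * Real.sqrt n ≤ TSPn n ω} := measure_mono claim1

end
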